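/- The function f is three times differentiable on (0,S), and for every z ∈ (0,S) one has f'''(z)·f'(z) − 3·f''(z)² = −m''(z)/m(z)²; in particular, since m''(z) ≤ 0, it holds that f'''(z)·f'(z) ≥ 3·f''(z)² for all z ∈ (0,S). -/

import Mathlib

open MeasureTheory Set Filter Topology

theorem f_third_derivative_identity
    (S : EReal) (hS : 0 < S) (m : ℝ → ℝ)
    (hm_c2 : ContDiffOn ℝ 2 m {z : ℝ | 0 < z ∧ (z : EReal) < S})
    (hm_pos : ∀ z : ℝ, 0 < z → (z : EReal) < S → 0 < m z)
    (hm_conc : ∀ z : ℝ, 0 < z → (z : EReal) < S → deriv (deriv m) z ≤ 0)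
    (hm0 : Tendsto m (𝓝[>] (0 : ℝ)) (𝓝 0))
    (hmS : S ≠ ⊤ → Tendsto m (𝓝[<] S.toReal) (𝓝 0)) :
    ∀ z : ℝ, 0 < z → (z : EReal) < S →
      DifferentiableAt ℝ (fun z => ∫ r in Ioo (0 : ℝ) z, Real.sqrt (2 / m r)) z ∧
      deriv (fun z => ∫ r in Ioo (0 : ℝ) z, Real.sqrt (2 / m r)) z = Real.sqrt (2 / m z) ∧
      DifferentiableAt ℝ (deriv (fun z => ∫ r in Ioo (0 : ℝ) z, Real.sqrt (2 / m r))) z ∧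
      DifferentiableAt ℝ
        (deriv (deriv (fun z => ∫ r in Ioo (0 : ℝ) z, Real.sqrt (2 / m r)))) z ∧
      deriv (deriv (deriv (fun z => ∫ r in Ioo (0 : ℝ) z, Real.sqrt (2 / m r)))) z
          * deriv (fun z => ∫ r in Ioo (0 : ℝ) z, Real.sqrt (2 / m r)) z
        - 3 * (deriv (deriv (fun z => ∫ r in Ioo (0 : ℝ) z, Real.sqrt (2 / m r))) z) ^ 2
        = -(deriv (deriv m) z) / (m z) ^ 2 ∧
      3 * (deriv (deriv (fun z => ∫ r in Ioo (0 : ℝ) z, Real.sqrt (2 / m r))) z) ^ 2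
        ≤ deriv (deriv (deriv (fun z => ∫ r in Ioo (0 : ℝ) z, Real.sqrt (2 / m r)))) z
          * deriv (fun z => ∫ r in Ioo (0 : ℝ) z, Real.sqrt (2 / m r)) z := by
  intro z hz hzS
  set U : Set ℝ := {z : ℝ | 0 < z ∧ (z : EReal) < S} with hUdef
  have hzU : z ∈ U := ⟨hz, hzS⟩
  have hUopen : IsOpen U := by
    have : U = Ioi (0:ℝ) ∩ ((fun x : ℝ => (x : EReal)) ⁻¹' Iio S) := by
      ext x; simp [hUdef, Set.mem_setOf_eq]
    rw [this]
    exact isOpen_Ioi.inter (isOpen_Iio.preimage continuous_coe_real_ereal)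
  have hUconv : Convex ℝ U := by
    apply Set.OrdConnected.convex
    constructor
    intro a ha b hb x hx
    exact ⟨lt_of_lt_of_le ha.1 hx.1,
      lt_of_le_of_lt (EReal.coe_le_coe_iff.mpr hx.2) hb.2⟩
  -- differentiability of m and deriv m on U
  have h2 := (contDiffOn_succ_iff_deriv_of_isOpen hUopen (n := 1)).1
    (by exact_mod_cast hm_c2)
  have hDm : DifferentiableOn ℝ m U := h2.1
  have hDm' : DifferentiableOn ℝ (deriv m) U := h2.2.2.differentiableOn one_ne_zero
  -- concavity
  have hconc : ConcaveOn ℝ U m := by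
    apply concaveOn_of_deriv2_nonpos hUconv hm_c2.continuousOn
    · rw [hUopen.interior_eq]; exact hDm
    · rw [hUopen.interior_eq]; exact hDm'
    · intro x hx
      rw [hUopen.interior_eq] at hx
      exact hm_conc x hx.1 hx.2
  -- linear lower bound on m
  have hlow : ∀ w ∈ U, ∀ r ∈ Ioo (0:ℝ) w, (m w / w) * r ≤ m r := by
    intro w hw r hr
    have hw0 : 0 < w := hw.1
    have hr0 : 0 < r := hr.1
    have hrw : r < w := hr.2
    have key : ∀ ε ∈ Ioo (0:ℝ) r,
        ((w - r)/(w - ε)) * m ε + ((r - ε)/(w - ε)) * m w ≤ m r := by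
      intro ε hε
      have hε0 : 0 < ε := hε.1
      have hεr : ε < r := hε.2
      have hεw : ε < w := hεr.trans hrw
      have hεU : ε ∈ U := ⟨hε0, lt_trans (by exact_mod_cast hεw) hw.2⟩
      have hwε : (0:ℝ) < w - ε := by linarith
      have ha : (0:ℝ) ≤ (w - r)/(w - ε) := by
        apply div_nonneg <;> linarith
      have hb : (0:ℝ) ≤ (r - ε)/(w - ε) := by
        apply div_nonneg <;> linarith
      have hab : (w - r)/(w - ε) + (r - ε)/(w - ε) = 1 := by
        field_simp
        ring
      have h := hconc.2 hεU hw ha hb hab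
      have hpt : ((w - r)/(w - ε)) • ε + ((r - ε)/(w - ε)) • w = r := by
        simp only [smul_eq_mul]
        field_simp
        ring
      rw [hpt] at h
      simpa [smul_eq_mul] using h
    have htend : Tendsto (fun ε => ((w - r)/(w - ε)) * m ε + ((r - ε)/(w - ε)) * m w)
        (𝓝[>] (0:ℝ)) (𝓝 (((w - r)/w) * 0 + (r/w) * m w)) := by
      apply Tendsto.add
      · apply Tendsto.mul _ hm0
        apply Tendsto.mono_left _ nhdsWithin_le_nhds
        apply Tendsto.div tendsto_const_nhds
        · exact (continuous_const.sub continuous_id).tendsto' (0:ℝ) _ (by simp)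
        · simpa using hw0.ne'
      · apply Tendsto.mono_left _ nhdsWithin_le_nhds
        apply Tendsto.mul_const
        apply Tendsto.div
        · exact (continuous_const.sub continuous_id).tendsto' (0:ℝ) _ (by simp)
        · exact (continuous_const.sub continuous_id).tendsto' (0:ℝ) _ (by simp)
        · simpa using hw0.ne'
    have : ((w - r)/w) * 0 + (r/w) * m w = (m w / w) * r := by ring
    rw [this] at htend
    refine le_of_tendsto htend ?_
    filter_upwards [Ioo_mem_nhdsGT_of_mem (by constructor <;> [exact le_refl 0; exact hr0])]
      with ε hε using key ε hε
  -- continuity of the integrand on U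
  have hgcont : ContinuousOn (fun r => Real.sqrt (2 / m r)) U := by
    apply Real.continuous_sqrt.comp_continuousOn
    exact continuousOn_const.div hm_c2.continuousOn
      (fun x hx => (hm_pos x hx.1 hx.2).ne')
  -- integrability on Ioo 0 w
  have hint : ∀ w ∈ U, IntegrableOn (fun r => Real.sqrt (2 / m r)) (Ioo 0 w) volume := by
    intro w hw
    have hmw : 0 < m w := hm_pos w hw.1 hw.2
    set c : ℝ := m w / w with hc
    have hc0 : 0 < c := div_pos hmw hw.1
    have hbound : IntegrableOn
        (fun r : ℝ => (Real.sqrt 2 / Real.sqrt c) * r ^ (-(1/2) : ℝ)) (Ioo 0 w) volume := by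
      have h1 : IntervalIntegrable (fun r : ℝ => r ^ (-(1/2):ℝ)) volume 0 w :=
        intervalIntegral.intervalIntegrable_rpow' (by norm_num)
      have h2 : IntegrableOn (fun r : ℝ => r ^ (-(1/2):ℝ)) (Ioc 0 w) volume :=
        (intervalIntegrable_iff_integrableOn_Ioc_of_le hw.1.le).1 h1
      exact (h2.mono_set Ioo_subset_Ioc_self).const_mul _
    refine hbound.integrable.mono' ?_ ?_
    · refine (hgcont.mono ?_).aestronglyMeasurable measurableSet_Ioo
      intro r hr
      exact ⟨hr.1, lt_trans (by exact_mod_cast hr.2) hw.2⟩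
    · rw [ae_restrict_iff' measurableSet_Ioo]
      filter_upwards with r hr
      have hr0 : 0 < r := hr.1
      have hcr : c * r ≤ m r := hlow w hw r hr
      have hmr : 0 < m r := lt_of_lt_of_le (by positivity) hcr
      rw [Real.norm_eq_abs, abs_of_nonneg (Real.sqrt_nonneg _)]
      have e1 : Real.sqrt (2 / m r) = Real.sqrt 2 / Real.sqrt (m r) :=
        Real.sqrt_div (by norm_num) _
      have e2 : r ^ (-(1/2):ℝ) = (Real.sqrt r)⁻¹ := by
        rw [Real.rpow_neg hr0.le, Real.sqrt_eq_rpow]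
      rw [e1, e2]
      have h3 : Real.sqrt (c * r) ≤ Real.sqrt (m r) := Real.sqrt_le_sqrt hcr
      rw [Real.sqrt_mul hc0.le] at h3
      have hsc : 0 < Real.sqrt c := Real.sqrt_pos.2 hc0
      have hsr : 0 < Real.sqrt r := Real.sqrt_pos.2 hr0
      have hrhs : Real.sqrt 2 / Real.sqrt c * (Real.sqrt r)⁻¹
          = Real.sqrt 2 / (Real.sqrt c * Real.sqrt r) := by
        field_simp
      rw [hrhs]
      gcongr
  -- interval integrability
  have hIG : ∀ w ∈ U, IntervalIntegrable (fun r => Real.sqrt (2 / m r)) volume 0 w := by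
    intro w hw
    rw [intervalIntegrable_iff_integrableOn_Ioc_of_le hw.1.le,
      integrableOn_Ioc_iff_integrableOn_Ioo]
    exact hint w hw
  -- F = G on U
  set F : ℝ → ℝ := fun u => ∫ r in Ioo (0:ℝ) u, Real.sqrt (2 / m r) with hFdef
  have hFG : ∀ w ∈ U, F w = ∫ r in (0:ℝ)..w, Real.sqrt (2 / m r) := by
    intro w hw
    rw [hFdef, intervalIntegral.integral_of_le hw.1.le, integral_Ioc_eq_integral_Ioo]
  have hF : ∀ w ∈ U, HasDerivAt F (Real.sqrt (2 / m w)) w := by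
    intro w hw
    have hG : HasDerivAt (fun u => ∫ r in (0:ℝ)..u, Real.sqrt (2 / m r))
        (Real.sqrt (2 / m w)) w :=
      intervalIntegral.integral_hasDerivAt_right (hIG w hw)
        ⟨U, hUopen.mem_nhds hw, hgcont.aestronglyMeasurable hUopen.measurableSet⟩
        (hgcont.continuousAt (hUopen.mem_nhds hw))
    refine hG.congr_of_eventuallyEq ?_
    filter_upwards [hUopen.mem_nhds hw] with u hu using hFG u hu
  have hderivF : ∀ w ∈ U, deriv F w = Real.sqrt (2 / m w) := fun w hw => (hF w hw).deriv
  -- derivative of sqrt ∘ m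
  have hsqm : ∀ w ∈ U, HasDerivAt (fun t => Real.sqrt (m t))
      (deriv m w / (2 * Real.sqrt (m w))) w := by
    intro w hw
    exact ((hDm.differentiableAt (hUopen.mem_nhds hw)).hasDerivAt).sqrt
      (hm_pos w hw.1 hw.2).ne'
  set D1 : ℝ → ℝ := fun w => -(Real.sqrt 2 * deriv m w) / (2 * Real.sqrt (m w) * m w)
    with hD1def
  have hg : ∀ w ∈ U, HasDerivAt (fun t => Real.sqrt (2 / m t)) (D1 w) w := by
    intro w hw
    have hmw : 0 < m w := hm_pos w hw.1 hw.2
    have hsw : 0 < Real.sqrt (m w) := Real.sqrt_pos.2 hmw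
    have h0 : HasDerivAt (fun t => Real.sqrt 2 / Real.sqrt (m t))
        ((0 * Real.sqrt (m w) - Real.sqrt 2 * (deriv m w / (2 * Real.sqrt (m w)))) /
          (Real.sqrt (m w)) ^ 2) w :=
      (hasDerivAt_const w (Real.sqrt 2)).div (hsqm w hw) hsw.ne'
    have heq : (0 * Real.sqrt (m w) - Real.sqrt 2 * (deriv m w / (2 * Real.sqrt (m w)))) /
          (Real.sqrt (m w)) ^ 2 = D1 w := by
      rw [hD1def]
      rw [Real.sq_sqrt hmw.le]
      field_simp
      ring
    rw [heq] at h0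
    refine h0.congr_of_eventuallyEq ?_
    filter_upwards [hUopen.mem_nhds hw] with u hu
    exact Real.sqrt_div (by norm_num) (m u)
  have hderiv2 : ∀ w ∈ U, deriv (deriv F) w = D1 w := by
    intro w hw
    have heq : deriv F =ᶠ[𝓝 w] fun t => Real.sqrt (2 / m t) := by
      filter_upwards [hUopen.mem_nhds hw] with u hu using hderivF u hu
    rw [heq.deriv_eq]
    exact (hg w hw).deriv
  have heqF1 : deriv F =ᶠ[𝓝 z] fun t => Real.sqrt (2 / m t) := by
    filter_upwards [hUopen.mem_nhds hzU] with u hu using hderivF u hu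
  have hdF1 : DifferentiableAt ℝ (deriv F) z :=
    heqF1.differentiableAt_iff.mpr (hg z hzU).differentiableAt
  -- third derivative
  have hmz : 0 < m z := hm_pos z hz hzS
  have hsz : 0 < Real.sqrt (m z) := Real.sqrt_pos.2 hmz
  have hm'z : HasDerivAt m (deriv m z) z :=
    (hDm.differentiableAt (hUopen.mem_nhds hzU)).hasDerivAt
  have hm''z : HasDerivAt (deriv m) (deriv (deriv m) z) z :=
    (hDm'.differentiableAt (hUopen.mem_nhds hzU)).hasDerivAt
  have hN : HasDerivAt (fun w => -(Real.sqrt 2 * deriv m w))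
      (-(Real.sqrt 2 * deriv (deriv m) z)) z := (hm''z.const_mul (Real.sqrt 2)).neg
  have hQ : HasDerivAt (fun w => 2 * Real.sqrt (m w) * m w)
      (2 * (deriv m z / (2 * Real.sqrt (m z))) * m z + 2 * Real.sqrt (m z) * deriv m z) z :=
    ((hsqm z hzU).const_mul 2).mul hm'z
  have hQz : (2 : ℝ) * Real.sqrt (m z) * m z ≠ 0 := by positivity
  have hD1' : HasDerivAt D1
      ((-(Real.sqrt 2 * deriv (deriv m) z) * (2 * Real.sqrt (m z) * m z)
        - -(Real.sqrt 2 * deriv m z) *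
          (2 * (deriv m z / (2 * Real.sqrt (m z))) * m z + 2 * Real.sqrt (m z) * deriv m z))
        / (2 * Real.sqrt (m z) * m z) ^ 2) z := hN.div hQ hQz
  have heqF2 : deriv (deriv F) =ᶠ[𝓝 z] D1 := by
    filter_upwards [hUopen.mem_nhds hzU] with u hu using hderiv2 u hu
  have hdF2 : DifferentiableAt ℝ (deriv (deriv F)) z :=
    heqF2.differentiableAt_iff.mpr hD1'.differentiableAt
  have hderiv3 : deriv (deriv (deriv F)) z =
      (-(Real.sqrt 2 * deriv (deriv m) z) * (2 * Real.sqrt (m z) * m z)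
        - -(Real.sqrt 2 * deriv m z) *
          (2 * (deriv m z / (2 * Real.sqrt (m z))) * m z + 2 * Real.sqrt (m z) * deriv m z))
        / (2 * Real.sqrt (m z) * m z) ^ 2 := by
    rw [heqF2.deriv_eq]
    exact hD1'.deriv
  -- the key identity
  have hid : deriv (deriv (deriv F)) z * deriv F z
      - 3 * (deriv (deriv F) z) ^ 2 = -(deriv (deriv m) z) / (m z) ^ 2 := by
    rw [hderivF z hzU, hderiv2 z hzU, hderiv3, hD1def]
    rw [Real.sqrt_div (by norm_num : (0:ℝ) ≤ 2) (m z)]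
    beta_reduce
    have key : ∀ s M a b q2 : ℝ, 0 < s → s ^ 2 = M → 0 < q2 → q2 * q2 = 2 →
        (-(q2 * b) * (2 * s * M) -
            -(q2 * a) * (2 * (a / (2 * s)) * M + 2 * s * a)) / (2 * s * M) ^ 2
          * (q2 / s) - 3 * (-(q2 * a) / (2 * s * M)) ^ 2 = -b / M ^ 2 := by
      intro s M a b q2 hs hsM hq20 hq2
      subst hsM
      field_simp
      ring_nf
      linear_combination (-2 * b * s ^ 2) * hq2
    exact key _ _ _ _ _ hsz (Real.sq_sqrt hmz.le) (Real.sqrt_pos.2 (by norm_num))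
      (Real.mul_self_sqrt (by norm_num))
  refine ⟨(hF z hzU).differentiableAt, hderivF z hzU, hdF1, hdF2, hid, ?_⟩
  have hb := hm_conc z hz hzS
  have hnn : 0 ≤ -(deriv (deriv m) z) / (m z) ^ 2 :=
    div_nonneg (by linarith) (by positivity)
  linarith [hid, hnn]
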